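/- Let X be a locally compact topological space, Y a Hausdorff uniform space, and equip C(X,Y) with the topology of uniform convergence τ_uc. A subfamily F ⊆ C(X,Y) is relatively τ_uc-compact (its closure in τ_uc is compact) if and only if (i) F is pointwise relatively compact, (ii) F is equicontinuous, and (iii) F satisfies the extension property. -/

import Mathlib

open Set Filter Topology
open scoped UniformConvergence Uniformity
open scoped SetRel

private lemma aux_mem_nhds_pts {X Y : Type*} [UniformSpace Y] {I : Set X} (hI : I.Finite)
    (f : X → Y) {W : Set (Y × Y)} (hW : W ∈ uniformity Y) :
    {h : X → Y | ∀ x ∈ I, (f x, h x) ∈ W} ∈ 𝓝 f := by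
  have heq : {h : X → Y | ∀ x ∈ I, (f x, h x) ∈ W}
      = ⋂ x ∈ I, (fun h : X → Y => h x) ⁻¹' {y | (f x, y) ∈ W} := by
    ext h; simp
  rw [heq]
  exact (biInter_mem hI).2 fun x _ =>
    (continuous_apply x).continuousAt.preimage_mem_nhds
      (UniformSpace.ball_mem_nhds (f x) hW)

private lemma aux_approx {X Y : Type*} [UniformSpace Y] {S : Set (X → Y)} {f : X → Y}
    (hf : f ∈ closure S) {I : Set X} (hI : I.Finite) {W : Set (Y × Y)}
    (hW : W ∈ uniformity Y) : ∃ h ∈ S, ∀ x ∈ I, (f x, h x) ∈ W := by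
  obtain ⟨h, hh⟩ := mem_closure_iff_nhds.1 hf _ (aux_mem_nhds_pts hI f hW)
  exact ⟨h, hh.2, hh.1⟩

private lemma aux_chain3 {Y : Type*} [UniformSpace Y] {V : Set (Y × Y)}
    (hV : V ∈ uniformity Y) :
    ∃ W ∈ uniformity Y, SetRel.IsSymm W ∧
      ∀ a b c d : Y, (a, b) ∈ W → (b, c) ∈ W → (c, d) ∈ W → (a, d) ∈ V := by
  obtain ⟨W, hW, hWs, hWV⟩ := comp_comp_symm_mem_uniformity_sets hV
  exact ⟨W, hW, hWs, fun a b c d h1 h2 h3 => hWV ⟨c, ⟨b, h1, h2⟩, h3⟩⟩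

private lemma aux_chain5 {Y : Type*} [UniformSpace Y] {V : Set (Y × Y)}
    (hV : V ∈ uniformity Y) :
    ∃ W ∈ uniformity Y, SetRel.IsSymm W ∧
      ∀ a b c d e f : Y, (a, b) ∈ W → (b, c) ∈ W → (c, d) ∈ W → (d, e) ∈ W →
        (e, f) ∈ W → (a, f) ∈ V := by
  obtain ⟨U₁, hU₁, _, hc1⟩ := aux_chain3 hV
  obtain ⟨W, hW, hWs, hc2⟩ := aux_chain3 hU₁
  have hsub : W ⊆ U₁ := fun p hp =>
    hc2 p.1 p.1 p.1 p.2 (refl_mem_uniformity hW) (refl_mem_uniformity hW) hp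
  exact ⟨W, hW, hWs, fun a b c d e f h1 h2 h3 h4 h5 =>
    hc1 a d e f (hc2 a b c d h1 h2 h3) (hsub h4) (hsub h5)⟩

/-- **Arzelà–Ascoli for the topology of uniform convergence.**
Let `X` be a locally compact topological space (every point has a compact
neighborhood), `Y` a Hausdorff uniform space, and consider the set of continuous
maps `X → Y` inside `X →ᵤ Y`, the space of functions with the topology of uniform
convergence.  A family `F` of continuous maps is relatively compact for the topology
of uniform convergence iff it is pointwise relatively compact, equicontinuous, and
satisfies the extension property. -/
theorem arzelaAscoli_uniformConvergence
    {X Y : Type*} [TopologicalSpace X] [WeaklyLocallyCompactSpace X]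
    [UniformSpace Y] [T2Space Y]
    (F : Set (X →ᵤ Y)) (hF : ∀ f ∈ F, Continuous (UniformFun.toFun f)) :
    IsCompact (closure F) ↔
      ((∀ x : X,
          IsCompact (closure ((fun f : X →ᵤ Y => UniformFun.toFun f x) '' F))) ∧
        (∀ x : X, ∀ V ∈ uniformity Y, ∃ U ∈ nhds x, ∀ f ∈ F, ∀ x' ∈ U,
          (UniformFun.toFun f x, UniformFun.toFun f x') ∈ V)) ∧
      (∀ V ∈ uniformity Y, ∃ D : Set X, IsCompact D ∧ ∃ U ∈ uniformity Y,
        ∀ f ∈ F, ∀ g ∈ F,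
          (∀ x ∈ D, (UniformFun.toFun f x, UniformFun.toFun g x) ∈ U) →
          ∀ x : X, (UniformFun.toFun f x, UniformFun.toFun g x) ∈ V) := by
  classical
  constructor
  · -- Forward direction
    intro hK
    have hKc : ∀ f ∈ closure F, Continuous (UniformFun.toFun f) := fun f hf =>
      closure_minimal hF (UniformFun.isClosed_setOf_continuous X) hf
    have hBnhds : ∀ {W : Set (Y × Y)}, W ∈ uniformity Y → ∀ p : X →ᵤ Y,
        {g : X →ᵤ Y | ∀ x', (UniformFun.toFun p x', UniformFun.toFun g x') ∈ W} ∈ 𝓝 p :=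
      fun {W} hW p => (UniformFun.hasBasis_nhds X Y p).mem_of_mem hW
    refine ⟨⟨fun x => ?_, fun x V hV => ?_⟩, fun V hV => ?_⟩
    · -- pointwise relative compactness
      have hev : Continuous (fun f : X →ᵤ Y => UniformFun.toFun f x) :=
        (UniformFun.uniformContinuous_eval Y x).continuous
      have h1 : IsCompact ((fun f : X →ᵤ Y => UniformFun.toFun f x) '' closure F) :=
        hK.image hev
      exact h1.of_isClosed_subset isClosed_closure
        (closure_minimal (image_mono subset_closure) h1.isClosed)
    · -- equicontinuity
      obtain ⟨W, hW, hWs, hch3⟩ := aux_chain3 hV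
      obtain ⟨t, ht⟩ := hK.elim_nhds_subcover'
        (fun p _ => {g : X →ᵤ Y | ∀ x', (UniformFun.toFun p x', UniformFun.toFun g x') ∈ W})
        (fun p _ => hBnhds hW p)
      refine ⟨⋂ p ∈ t, {x' | (UniformFun.toFun p.1 x, UniformFun.toFun p.1 x') ∈ W}, ?_, ?_⟩
      · refine (Filter.biInter_finset_mem t).2 fun p _ => ?_
        exact (hKc p.1 p.2).continuousAt.preimage_mem_nhds
          (UniformSpace.ball_mem_nhds _ hW)
      · intro f hf x' hx'
        obtain ⟨p, hpt, hfp⟩ := mem_iUnion₂.1 (ht (subset_closure hf))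
        have hx'p : (UniformFun.toFun p.1 x, UniformFun.toFun p.1 x') ∈ W :=
          mem_iInter₂.1 hx' p hpt
        exact hch3 _ _ _ _ (hWs.symm _ _ (hfp x)) hx'p (hfp x')
    · -- extension property
      obtain ⟨W, hW, hWs, hch5⟩ := aux_chain5 hV
      obtain ⟨t, ht⟩ := hK.elim_nhds_subcover'
        (fun p _ => {g : X →ᵤ Y | ∀ x', (UniformFun.toFun p x', UniformFun.toFun g x') ∈ W})
        (fun p _ => hBnhds hW p)
      set S : (X →ᵤ Y) → (X →ᵤ Y) → Set X := fun p q =>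
        if h : ∃ x, (UniformFun.toFun p x, UniformFun.toFun q x) ∉ W ○ W ○ W
          then {h.choose} else ∅ with hS
      refine ⟨⋃ p ∈ t, ⋃ q ∈ t, S p.1 q.1, ?_, W, hW, ?_⟩
      · apply Set.Finite.isCompact
        refine Set.Finite.biUnion t.finite_toSet fun p _ =>
          Set.Finite.biUnion t.finite_toSet fun q _ => ?_
        by_cases h : ∃ x, (UniformFun.toFun p.1 x, UniformFun.toFun q.1 x) ∉ W ○ W ○ W
        · simp only [hS, dif_pos h]; exact finite_singleton _
        · simp only [hS, dif_neg h]; exact finite_empty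
      · intro f hf g hg hfg x
        obtain ⟨p, hpt, hfp⟩ := mem_iUnion₂.1 (ht (subset_closure hf))
        obtain ⟨q, hqt, hgq⟩ := mem_iUnion₂.1 (ht (subset_closure hg))
        have hpq : ∀ x', (UniformFun.toFun p.1 x', UniformFun.toFun q.1 x') ∈ W ○ W ○ W := by
          by_contra hcon
          push_neg at hcon
          have hmem : hcon.choose ∈ S p.1 q.1 := by
            rw [hS]; simp only [dif_pos hcon]; exact rfl
          have hmemD : hcon.choose ∈ ⋃ p ∈ t, ⋃ q ∈ t, S p.1 q.1 :=
            mem_biUnion hpt (mem_biUnion hqt hmem)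
          refine hcon.choose_spec ?_
          exact ⟨UniformFun.toFun g hcon.choose,
            ⟨UniformFun.toFun f hcon.choose, hfp hcon.choose,
              hfg hcon.choose hmemD⟩, hWs.symm _ _ (hgq hcon.choose)⟩
        obtain ⟨c, ⟨b, hab, hbc⟩, hcd⟩ := hpq x
        exact hch5 _ _ _ _ _ _ (hWs.symm _ _ (hfp x)) hab hbc hcd (hgq x)
  · -- Backward direction
    rintro ⟨⟨hpc, hequi⟩, hext⟩
    set F' : Set (X → Y) := UniformFun.toFun '' F with hF'
    -- the pointwise closure is compact for the product topology
    have hGsub : closure F' ⊆ univ.pi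
        fun x => closure ((fun f : X →ᵤ Y => UniformFun.toFun f x) '' F) := by
      refine closure_minimal ?_ (isClosed_set_pi fun x _ => isClosed_closure)
      rintro h ⟨f, hf, rfl⟩ x _
      exact subset_closure ⟨f, hf, rfl⟩
    have hGcomp : IsCompact (closure F') :=
      (isCompact_univ_pi fun x => hpc x).of_isClosed_subset isClosed_closure hGsub
    -- equicontinuity of the pointwise closure
    have hF'eq : F'.Equicontinuous := by
      intro x₀ U hU
      obtain ⟨O, hO, hOp⟩ := hequi x₀ U hU
      filter_upwards [hO] with x' hx'
      rintro ⟨h, f, hf, rfl⟩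
      exact hOp f hf x' hx'
    have hGeq : ∀ x : X, ∀ W ∈ uniformity Y, ∃ O ∈ 𝓝 x,
        ∀ h ∈ closure F', ∀ x' ∈ O, (h x, h x') ∈ W := by
      intro x W hW
      obtain ⟨O, hO, hOp⟩ := (hF'eq.closure x W hW).exists_mem
      exact ⟨O, hO, fun h hh x' hx' => hOp x' hx' ⟨h, hh⟩⟩
    -- extension property for the pointwise closure
    have hGext : ∀ V ∈ uniformity Y, ∃ D : Set X, IsCompact D ∧ ∃ U ∈ uniformity Y,
        ∀ f ∈ closure F', ∀ g ∈ closure F',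
          (∀ x ∈ D, (f x, g x) ∈ U) → ∀ x, (f x, g x) ∈ V := by
      intro V hV
      obtain ⟨V₀, ⟨hV₀u, hV₀c⟩, hV₀V⟩ := uniformity_hasBasis_closed.mem_iff.1 hV
      obtain ⟨D, hD, U, hU, hUV⟩ := hext V₀ hV₀u
      obtain ⟨U₀, hU₀, hU₀s, hch5⟩ := aux_chain5 hU
      refine ⟨D, hD, U₀, hU₀, fun f hf g hg hclose x₀ => ?_⟩
      apply hV₀V
      rw [← hV₀c.closure_eq, closure_eq_uniformity]
      refine mem_iInter₂.2 fun W hWp => ?_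
      obtain ⟨hWu, hWs⟩ := hWp
      have hW₂u : W ∩ U₀ ∈ uniformity Y := inter_mem hWu hU₀
      have hW₂s : SetRel.IsSymm (W ∩ U₀) := by haveI := hWs; haveI := hU₀s; infer_instance
      choose O hO hOp using fun x => hGeq x (W ∩ U₀) hW₂u
      obtain ⟨t, ht⟩ := hD.elim_nhds_subcover' (fun x _ => O x) fun x _ => hO x
      have hIfin : (insert x₀ (Subtype.val '' (t : Set D))).Finite :=
        ((t : Set D).toFinite.image _).insert x₀
      obtain ⟨f', hf'F, hf'⟩ := aux_approx hf hIfin hW₂u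
      obtain ⟨g', hg'F, hg'⟩ := aux_approx hg hIfin hW₂u
      have hf'G : f' ∈ closure F' := subset_closure hf'F
      have hg'G : g' ∈ closure F' := subset_closure hg'F
      obtain ⟨ff, hff, hffe⟩ := hf'F
      obtain ⟨gg, hgg, hgge⟩ := hg'F
      have hUclose : ∀ x ∈ D, (f' x, g' x) ∈ U := by
        intro x hx
        obtain ⟨c, hct, hxc⟩ := mem_iUnion₂.1 (ht hx)
        have hcI : (c : X) ∈ insert x₀ (Subtype.val '' (t : Set D)) :=
          mem_insert_of_mem _ ⟨c, hct, rfl⟩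
        have l1 := hOp c f' hf'G x hxc
        have l2 := hf' c hcI
        have l3 : (f (c : X), g c) ∈ U₀ := hclose c c.2
        have l4 := hg' c hcI
        have l5 := hOp c g' hg'G x hxc
        exact hch5 (f' x) (f' c) (f c) (g c) (g' c) (g' x)
          (hW₂s.symm _ _ l1).2 (hW₂s.symm _ _ l2).2 l3 l4.2 l5.2
      have hfg' : (f' x₀, g' x₀) ∈ V₀ := by
        have := hUV ff hff gg hgg ?_ x₀
        · rwa [hffe, hgge] at this
        · intro x hx
          rw [hffe, hgge]
          exact hUclose x hx
      exact ⟨g' x₀, ⟨f' x₀, (hf' x₀ (mem_insert _ _)).1, hfg'⟩,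
        (hW₂s.symm _ _ (hg' x₀ (mem_insert _ _))).1⟩
    -- ofFun is continuous on the pointwise closure
    have hcont : ContinuousOn (UniformFun.ofFun : (X → Y) → (X →ᵤ Y)) (closure F') := by
      intro f hf
      rw [ContinuousWithinAt,
        (UniformFun.hasBasis_nhds X Y (UniformFun.ofFun f)).tendsto_right_iff]
      intro V hV
      obtain ⟨D, hD, U, hU, hUV⟩ := hGext V hV
      obtain ⟨W, hW, hWs, hch3⟩ := aux_chain3 hU
      choose O hO hOp using fun x => hGeq x W hW
      obtain ⟨t, ht⟩ := hD.elim_nhds_subcover' (fun x _ => O x) fun x _ => hO x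
      have hN := aux_mem_nhds_pts ((t : Set D).toFinite.image Subtype.val) f hW
      filter_upwards [mem_nhdsWithin_of_mem_nhds hN, self_mem_nhdsWithin] with h hhN hhG
      show ∀ x, (f x, h x) ∈ V
      refine hUV f hf h hhG fun z hz => ?_
      obtain ⟨c, hct, hzc⟩ := mem_iUnion₂.1 (ht hz)
      have hcI : (c : X) ∈ Subtype.val '' (t : Set D) := ⟨c, hct, rfl⟩
      exact hch3 (f z) (f (c : X)) (h (c : X)) (h z)
        (hWs.symm _ _ (hOp c f hf z hzc)) (hhN c hcI) (hOp c h hhG z hzc)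
    have himg : IsCompact (UniformFun.ofFun '' closure F') :=
      hGcomp.image_of_continuousOn hcont
    have hFsub : F ⊆ UniformFun.ofFun '' closure F' := fun f hf =>
      ⟨UniformFun.toFun f, subset_closure ⟨f, hf, rfl⟩, UniformFun.ofFun_toFun f⟩
    exact himg.of_isClosed_subset isClosed_closure (closure_minimal hFsub himg.isClosed)
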